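/- arXiv:0811.2117 — 2 statements merged into one kernel-verified Lean document; each statement's English description precedes it below -/
import Mathlib

section
/- Under the single functional dependency setting, the disjunctive database of all transversal-disjunctions of clusters (one fact from each cluster of a clique) equals its own reduction (no disjunction properly contains another), provided every clique has at least two clusters or handle singleton cliques as singleton disjunctions; hence it is the canonical disjunctive database representing the repairs. -/
variable {F : Type*} [DecidableEq F]

/-- M is a model of the disjunctive database D: it meets every disjunction. -/
def IsModel (D : Finset (Finset F)) (M : Finset F) : Prop :=
  ∀ d ∈ D, ∃ t ∈ d, t ∈ M

/-- M is a minimal model of D. -/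
def IsMinModel (D : Finset (Finset F)) (M : Finset F) : Prop :=
  IsModel D M ∧ ∀ M' ⊂ M, ¬ IsModel D M'

/-- reduction removes every disjunction properly containing another disjunction of D. -/
def reduction (D : Finset (Finset F)) : Finset (Finset F) :=
  D.filter (fun d => ∀ d' ∈ D, ¬ d' ⊂ d)

lemma model_mono {D : Finset (Finset F)} {M M' : Finset F} (h : M ⊆ M')
    (hM : IsModel D M) : IsModel D M' := by
  intro d hd
  obtain ⟨t, ht, htM⟩ := hM d hd
  exact ⟨t, ht, h htM⟩

lemma exists_min_model (D : Finset (Finset F)) :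
    ∀ M : Finset F, IsModel D M → ∃ M₀ ⊆ M, IsMinModel D M₀ := by
  intro M
  induction M using Finset.strongInduction with
  | _ M ih =>
    intro hM
    by_cases h : ∀ M' ⊂ M, ¬ IsModel D M'
    · exact ⟨M, Finset.Subset.refl M, hM, h⟩
    · push_neg at h
      obtain ⟨M', hsub, hM'⟩ := h
      obtain ⟨M₀, h0, hmin⟩ := ih M' hsub hM'
      exact ⟨M₀, h0.trans hsub.1, hmin⟩

theorem stmt10 (n : ℕ) (m : Fin n → ℕ) (hm : ∀ i, 0 < m i)
    (G : (i : Fin n) → Fin (m i) → Finset F)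
    (hne : ∀ i j, (G i j).Nonempty)
    (hdisj : ∀ p q : Σ i : Fin n, Fin (m i), p ≠ q → Disjoint (G p.1 p.2) (G q.1 q.2))
    (D : Finset (Finset F))
    (hD : ∀ d : Finset F, d ∈ D ↔
      ∃ (i : Fin n) (g : Fin (m i) → F), (∀ j, g j ∈ G i j) ∧ d = Finset.univ.image g) :
    reduction D = D
    ∧ (∀ M : Finset F, IsMinModel D M
        ↔ ∃ j : (i : Fin n) → Fin (m i), M = Finset.univ.biUnion (fun i => G i (j i)))
    ∧ (∀ D' : Finset (Finset F), (∀ d ∈ D', d.Nonempty) →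
        (∀ M : Finset F, IsMinModel D' M ↔ IsMinModel D M) → D ⊆ D') := by
  -- two clusters sharing an element are identical
  have sig : ∀ {i i' : Fin n} {j : Fin (m i)} {j' : Fin (m i')} {t : F},
      t ∈ G i j → t ∈ G i' j' → (⟨i, j⟩ : Σ i, Fin (m i)) = ⟨i', j'⟩ := by
    intro i i' j j' t h1 h2
    by_contra h
    exact Finset.disjoint_left.mp (hdisj ⟨i, j⟩ ⟨i', j'⟩ h) h1 h2
  -- characterization of models
  have modelChar : ∀ M : Finset F, IsModel D M ↔ ∀ i, ∃ j, G i j ⊆ M := by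
    intro M
    constructor
    · intro hM i
      by_contra h
      push_neg at h
      choose t ht htM using fun j => Finset.not_subset.mp (h j)
      obtain ⟨s, hs, hsM⟩ := hM (Finset.univ.image t) ((hD _).mpr ⟨i, t, ht, rfl⟩)
      obtain ⟨j, -, rfl⟩ := Finset.mem_image.mp hs
      exact htM j hsM
    · intro h d hd
      obtain ⟨i, g, hg, rfl⟩ := (hD d).mp hd
      obtain ⟨j, hj⟩ := h i
      exact ⟨g j, Finset.mem_image_of_mem g (Finset.mem_univ j), hj (hg j)⟩
  set Mof : ((i : Fin n) → Fin (m i)) → Finset F :=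
    fun j => Finset.univ.biUnion (fun i => G i (j i)) with hMof
  have memMof : ∀ (j : (i : Fin n) → Fin (m i)) (t : F),
      t ∈ Mof j ↔ ∃ i, t ∈ G i (j i) := by
    intro j t
    simp [hMof]
  -- each Mof j is a minimal model
  have minMof : ∀ j : (i : Fin n) → Fin (m i), IsMinModel D (Mof j) := by
    intro j
    constructor
    · exact (modelChar _).mpr fun i =>
        ⟨j i, fun t ht => (memMof j t).mpr ⟨i, ht⟩⟩
    · intro M' hsub hM'
      choose j' hj' using (modelChar M').mp hM'
      have heq : ∀ i, j' i = j i := by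
        intro i
        obtain ⟨s, hs⟩ := hne i (j' i)
        have hsM : s ∈ Mof j := hsub.1 (hj' i hs)
        obtain ⟨i₂, hi₂⟩ := (memMof j s).mp hsM
        have e := sig hs hi₂
        injection e with e1 e2
        subst e1
        exact eq_of_heq e2
      have : Mof j ⊆ M' := by
        intro t ht
        obtain ⟨i, hi⟩ := (memMof j t).mp ht
        exact hj' i (by rw [heq i]; exact hi)
      exact hsub.2 this
  -- characterization of minimal models
  have minChar : ∀ M : Finset F, IsMinModel D M ↔ ∃ j, M = Mof j := by
    intro M
    constructor
    · rintro ⟨hM, hmin⟩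
      choose j hj using (modelChar M).mp hM
      refine ⟨j, ?_⟩
      have hsub : Mof j ⊆ M := by
        intro t ht
        obtain ⟨i, hi⟩ := (memMof j t).mp ht
        exact hj i hi
      by_contra hne'
      have hss : Mof j ⊂ M := ⟨hsub, fun h => hne' (Finset.Subset.antisymm h hsub)⟩
      exact hmin _ hss (minMof j).1
    · rintro ⟨j, rfl⟩
      exact minMof j
  refine ⟨?_, ?_, ?_⟩
  · -- reduction D = D
    apply Finset.filter_eq_self.mpr
    intro d hd d' hd' hss
    obtain ⟨i, g, hg, rfl⟩ := (hD d).mp hd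
    obtain ⟨i', g', hg', rfl⟩ := (hD d').mp hd'
    -- i' = i
    have h0 : g' ⟨0, hm i'⟩ ∈ Finset.univ.image g :=
      hss.1 (Finset.mem_image_of_mem g' (Finset.mem_univ _))
    obtain ⟨j, -, hj⟩ := Finset.mem_image.mp h0
    have e := sig (hg' ⟨0, hm i'⟩) (hj ▸ hg j : g' ⟨0, hm i'⟩ ∈ G i j)
    injection e with e1 e2
    subst e1
    -- g' = g
    have hgg : g' = g := by
      funext j'
      have h1 : g' j' ∈ Finset.univ.image g :=
        hss.1 (Finset.mem_image_of_mem g' (Finset.mem_univ _))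
      obtain ⟨j₂, -, hj₂⟩ := Finset.mem_image.mp h1
      have e := sig (hg' j') (hj₂ ▸ hg j₂ : g' j' ∈ G i' j₂)
      injection e with e1' e2'
      subst e2'
      exact hj₂.symm
    exact hss.2 (by rw [hgg])
  · -- minimal models
    exact fun M => minChar M
  · -- canonicity
    intro D' hne' hiff
    have modelsEq : ∀ M : Finset F, IsModel D' M ↔ IsModel D M := by
      intro M
      constructor
      · intro h
        obtain ⟨M₀, hsub, hmin⟩ := exists_min_model D' M h
        exact model_mono hsub ((hiff M₀).mp hmin).1
      · intro h
        obtain ⟨M₀, hsub, hmin⟩ := exists_min_model D M h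
        exact model_mono hsub ((hiff M₀).mpr hmin).1
    intro d hd
    obtain ⟨i, g, hg, rfl⟩ := (hD d).mp hd
    -- some d' ∈ D' is contained in d
    have hex : ∃ d' ∈ D', d' ⊆ Finset.univ.image g := by
      by_contra h
      push_neg at h
      have hch : ∀ d' ∈ D', ∃ t, t ∈ d' ∧ t ∉ Finset.univ.image g := by
        intro d' hd'
        obtain ⟨t, ht1, ht2⟩ := Finset.not_subset.mp (h d' hd')
        exact ⟨t, ht1, ht2⟩
      choose f hf1 hf2 using hch
      set M : Finset F := D'.attach.image (fun x => f x.1 x.2) with hMdef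
      have hM' : IsModel D' M := by
        intro d' hd'
        exact ⟨f d' hd', hf1 d' hd',
          Finset.mem_image.mpr ⟨⟨d', hd'⟩, Finset.mem_attach _ _, rfl⟩⟩
      obtain ⟨t, htd, htM⟩ := (modelsEq M).mp hM' _ hd
      obtain ⟨⟨d', hd'⟩, -, rfl⟩ := Finset.mem_image.mp htM
      exact hf2 d' hd' htd
    obtain ⟨d', hd', hsub⟩ := hex
    -- d ⊆ d'
    have hsup : Finset.univ.image g ⊆ d' := by
      intro t ht
      obtain ⟨jst, -, rfl⟩ := Finset.mem_image.mp ht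
      set jj : (i' : Fin n) → Fin (m i') :=
        Function.update (fun i' => (⟨0, hm i'⟩ : Fin (m i'))) i jst with hjj
      have hmm2 : IsMinModel D' (Mof jj) := (hiff _).mpr (minMof jj)
      obtain ⟨s, hs', hsM⟩ := hmm2.1 d' hd'
      obtain ⟨j₁, -, hj₁⟩ := Finset.mem_image.mp (hsub hs')
      obtain ⟨i₂, hi₂⟩ := (memMof jj s).mp hsM
      have e := sig (hj₁ ▸ hg j₁ : s ∈ G i j₁) hi₂
      injection e with e1 e2
      subst e1
      have e3 : j₁ = jj i := eq_of_heq e2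
      have e4 : jj i = jst := by simp [hjj]
      rw [← e4, ← e3, hj₁]
      exact hs'
    have : d' = Finset.univ.image g := Finset.Subset.antisymm hsub hsup
    rwa [← this]
end

section
/- For the family D_n with n ≥ 2 (conflict edges {t_{i1},t_{j1}} for i≠j, {t_{i1},t_{i2}}, {t_{i2},t_{i3}}), the disjunctive database D = { t_{i2} ∨ t_{i3} : 1 ≤ i ≤ n } ∪ { t_1 ∨ ... ∨ t_n : t_i ∈ {t_{i1}, t_{i3}} } has as its minimal models exactly the cardinality-based repairs, namely the sets {t_{i1}, t_{i3}} ∪ { t_j : j ≠ i, t_j ∈ {t_{j2}, t_{j3}} }. -/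
variable {F : Type*} [DecidableEq F]

/-- S is conflict-free w.r.t. a binary conflict relation G. -/
def ConflictFree (G : F → F → Prop) (S : Finset F) : Prop :=
  ∀ a ∈ S, ∀ b ∈ S, ¬ G a b

/-- S is a repair of V w.r.t. conflict relation G: a maximal conflict-free subset of V. -/
def IsRepairC (V : Finset F) (G : F → F → Prop) (S : Finset F) : Prop :=
  S ⊆ V ∧ ConflictFree G S ∧ ∀ S', S ⊂ S' → S' ⊆ V → ¬ ConflictFree G S'

/-- Conflict relation of the family D_n: facts are (i,k) with k=0,1,2 encoding
    t_{i1}, t_{i2}, t_{i3}. Edges: {t_{i1},t_{j1}} for i≠j, {t_{i1},t_{i2}}, {t_{i2},t_{i3}}. -/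
def ConfDn (n : ℕ) (a b : Fin n × Fin 3) : Prop :=
  (a.2 = 0 ∧ b.2 = 0 ∧ a.1 ≠ b.1) ∨
  (a.1 = b.1 ∧ ((a.2 = 0 ∧ b.2 = 1) ∨ (a.2 = 1 ∧ b.2 = 0) ∨
                (a.2 = 1 ∧ b.2 = 2) ∨ (a.2 = 2 ∧ b.2 = 1)))

/-- The repair {t_{12},...,t_{n2}}. -/
def repA (n : ℕ) : Finset (Fin n × Fin 3) :=
  Finset.univ.image (fun i => (i, (1 : Fin 3)))

/-- The repair {t_{i1}, t_{i3}} ∪ { (j, f j) : j ≠ i } (for f choosing among t_{j2}, t_{j3}). -/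
def repB (n : ℕ) (i : Fin n) (f : Fin n → Fin 3) : Finset (Fin n × Fin 3) :=
  insert (i, (0 : Fin 3)) (insert (i, (2 : Fin 3))
    ((Finset.univ.erase i).image (fun j => (j, f j))))

/-- The disjunctions t_{i2} ∨ t_{i3}. -/
def DnD1 (n : ℕ) : Finset (Finset (Fin n × Fin 3)) :=
  Finset.univ.image (fun i : Fin n => ({(i, (1 : Fin 3)), (i, (2 : Fin 3))} : Finset (Fin n × Fin 3)))

/-- The disjunctions t_{i1} ∨ t_{i2} ∨ ⋁_{z ≠ i} t_z with t_z ∈ {t_{z1}, t_{z3}}. -/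
def DnD2 (n : ℕ) : Finset (Finset (Fin n × Fin 3)) :=
  Finset.univ.image (fun p : Fin n × (Fin n → Bool) =>
    insert (p.1, (0 : Fin 3)) (insert (p.1, (1 : Fin 3))
      ((Finset.univ.erase p.1).image
        (fun z => (z, if p.2 z then (0 : Fin 3) else (2 : Fin 3))))))

/-- The disjunctions t_1 ∨ ... ∨ t_n with t_i ∈ {t_{i1}, t_{i3}}. -/
def DnD3 (n : ℕ) : Finset (Finset (Fin n × Fin 3)) :=
  Finset.univ.image (fun g : Fin n → Bool =>
    Finset.univ.image (fun i : Fin n => (i, if g i then (0 : Fin 3) else (2 : Fin 3))))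

/-- A cardinality-based repair: a conflict-free set of maximum cardinality. -/
def IsCardRepair (G : F → F → Prop) (S : Finset F) : Prop :=
  ConflictFree G S ∧ ∀ S' : Finset F, ConflictFree G S' → S'.card ≤ S.card

lemma mem_repB {n : ℕ} (i : Fin n) (f : Fin n → Fin 3) (a : Fin n) (k : Fin 3) :
    (a, k) ∈ repB n i f ↔ (a = i ∧ (k = 0 ∨ k = 2)) ∨ (a ≠ i ∧ k = f a) := by
  simp only [repB, Finset.mem_insert, Finset.mem_image, Finset.mem_erase,
    Finset.mem_univ, and_true, Prod.ext_iff]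
  constructor
  · rintro (⟨h1, h2⟩ | ⟨h1, h2⟩ | ⟨j, hj, h1, h2⟩)
    · exact Or.inl ⟨h1, Or.inl h2⟩
    · exact Or.inl ⟨h1, Or.inr h2⟩
    · subst h1; exact Or.inr ⟨hj, h2.symm⟩
  · rintro (⟨h1, (h2 | h2)⟩ | ⟨h1, h2⟩)
    · exact Or.inl ⟨h1, h2⟩
    · exact Or.inr (Or.inl ⟨h1, h2⟩)
    · exact Or.inr (Or.inr ⟨a, h1, rfl, h2.symm⟩)

lemma model_iff {n : ℕ} (M : Finset (Fin n × Fin 3)) :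
    IsModel (DnD1 n ∪ DnD3 n) M ↔
      ((∀ j : Fin n, (j, (1:Fin 3)) ∈ M ∨ (j, (2:Fin 3)) ∈ M) ∧
       (∃ i : Fin n, (i, (0:Fin 3)) ∈ M ∧ (i, (2:Fin 3)) ∈ M)) := by
  constructor
  · intro hM
    constructor
    · intro j
      obtain ⟨t, ht, htM⟩ := hM ({(j, (1:Fin 3)), (j, (2:Fin 3))} : Finset _)
        (Finset.mem_union_left _ (Finset.mem_image.mpr ⟨j, Finset.mem_univ _, rfl⟩))
      rcases Finset.mem_insert.mp ht with h | h
      · exact Or.inl (h ▸ htM)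
      · exact Or.inr ((Finset.mem_singleton.mp h) ▸ htM)
    · obtain ⟨t, ht, htM⟩ := hM
        (Finset.univ.image (fun z : Fin n =>
          (z, if (decide ((z, (2:Fin 3)) ∈ M)) then (0:Fin 3) else 2)))
        (Finset.mem_union_right _
          (Finset.mem_image.mpr ⟨fun z => decide ((z, (2:Fin 3)) ∈ M), Finset.mem_univ _, rfl⟩))
      obtain ⟨z, _, hz⟩ := Finset.mem_image.mp ht
      by_cases h2 : (z, (2:Fin 3)) ∈ M
      · refine ⟨z, ?_, h2⟩
        simp only [h2, decide_eq_true_eq, if_pos] at hz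
        exact hz ▸ htM
      · exfalso
        rw [if_neg (by simpa using h2)] at hz
        exact h2 (hz ▸ htM)
  · rintro ⟨h1, i, hi0, hi2⟩ d hd
    rcases Finset.mem_union.mp hd with hd | hd
    · obtain ⟨j, _, rfl⟩ := Finset.mem_image.mp hd
      rcases h1 j with h | h
      · exact ⟨(j, 1), by simp, h⟩
      · exact ⟨(j, 2), by simp, h⟩
    · obtain ⟨g, _, rfl⟩ := Finset.mem_image.mp hd
      by_cases hg : g i
      · exact ⟨(i, 0), Finset.mem_image.mpr ⟨i, Finset.mem_univ _, by simp [hg]⟩, hi0⟩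
      · exact ⟨(i, 2), Finset.mem_image.mpr ⟨i, Finset.mem_univ _, by simp [hg]⟩, hi2⟩

theorem stmt16 (n : ℕ) (hn : 2 ≤ n) :
    ∀ M : Finset (Fin n × Fin 3),
      IsMinModel (DnD1 n ∪ DnD3 n) M
      ↔ ∃ (i : Fin n) (f : Fin n → Fin 3),
          (∀ j, f j = 1 ∨ f j = 2) ∧ M = repB n i f := by
  intro M
  constructor
  · rintro ⟨hM, hmin⟩
    obtain ⟨h1, i, hi0, hi2⟩ := (model_iff M).mp hM
    classical
    set f : Fin n → Fin 3 := fun j => if (j, (1:Fin 3)) ∈ M then 1 else 2 with hf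
    have hf12 : ∀ j, f j = 1 ∨ f j = 2 := by
      intro j; by_cases h : (j, (1:Fin 3)) ∈ M <;> simp [hf, h]
    have hsub : repB n i f ⊆ M := by
      intro t ht
      obtain ⟨a, k⟩ := t
      rcases (mem_repB i f a k).mp ht with ⟨rfl, (rfl | rfl)⟩ | ⟨_, rfl⟩
      · exact hi0
      · exact hi2
      · by_cases h : (a, (1:Fin 3)) ∈ M
        · simpa [hf, h] using h
        · rcases h1 a with h' | h'
          · exact absurd h' h
          · simpa [hf, h] using h'
    have hmodel : IsModel (DnD1 n ∪ DnD3 n) (repB n i f) := by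
      rw [model_iff]
      refine ⟨fun j => ?_, i, ?_, ?_⟩
      · by_cases hji : j = i
        · exact Or.inr ((mem_repB i f j 2).mpr (Or.inl ⟨hji, Or.inr rfl⟩))
        · rcases hf12 j with h | h
          · exact Or.inl ((mem_repB i f j 1).mpr (Or.inr ⟨hji, h.symm⟩))
          · exact Or.inr ((mem_repB i f j 2).mpr (Or.inr ⟨hji, h.symm⟩))
      · exact (mem_repB i f i 0).mpr (Or.inl ⟨rfl, Or.inl rfl⟩)
      · exact (mem_repB i f i 2).mpr (Or.inl ⟨rfl, Or.inr rfl⟩)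
    have heq : repB n i f = M := by
      by_contra hne
      exact hmin (repB n i f) (lt_of_le_of_ne hsub hne) hmodel
    exact ⟨i, f, hf12, heq.symm⟩
  · rintro ⟨i, f, hf12, rfl⟩
    have hmodel : IsModel (DnD1 n ∪ DnD3 n) (repB n i f) := by
      rw [model_iff]
      refine ⟨fun j => ?_, i, ?_, ?_⟩
      · by_cases hji : j = i
        · exact Or.inr ((mem_repB i f j 2).mpr (Or.inl ⟨hji, Or.inr rfl⟩))
        · rcases hf12 j with h | h
          · exact Or.inl ((mem_repB i f j 1).mpr (Or.inr ⟨hji, h.symm⟩))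
          · exact Or.inr ((mem_repB i f j 2).mpr (Or.inr ⟨hji, h.symm⟩))
      · exact (mem_repB i f i 0).mpr (Or.inl ⟨rfl, Or.inl rfl⟩)
      · exact (mem_repB i f i 2).mpr (Or.inl ⟨rfl, Or.inr rfl⟩)
    refine ⟨hmodel, fun M' hM' hM'model => ?_⟩
    obtain ⟨h1, j, hj0, hj2⟩ := (model_iff M').mp hM'model
    have hsub : M' ⊆ repB n i f := hM'.subset
    -- (j,0) ∈ repB forces j = i
    have hji : j = i := by
      rcases (mem_repB i f j 0).mp (hsub hj0) with ⟨h, _⟩ | ⟨_, h⟩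
      · exact h
      · rcases hf12 j with h' | h' <;> rw [h'] at h <;> exact absurd h (by decide)
    rw [hji] at hj0 hj2
    have : repB n i f ⊆ M' := by
      intro t ht
      obtain ⟨a, k⟩ := t
      rcases (mem_repB i f a k).mp ht with ⟨rfl, (rfl | rfl)⟩ | ⟨hai, rfl⟩
      · exact hj0
      · exact hj2
      · rcases h1 a with h | h
        · have := (mem_repB i f a 1).mp (hsub h)
          rcases this with ⟨rfl, (h' | h')⟩ | ⟨_, h'⟩
          · exact absurd h' (by decide)
          · exact absurd h' (by decide)
          · exact h' ▸ h
        · have := (mem_repB i f a 2).mp (hsub h)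
          rcases this with ⟨rfl, _⟩ | ⟨_, h'⟩
          · exact absurd rfl hai
          · exact h' ▸ h
    exact absurd (Finset.Subset.antisymm hsub this) (Finset.ssubset_iff_subset_ne.mp hM').2
end
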